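/- arXiv:2401.11287 — 3 statements merged into one kernel-verified Lean document; each statement's English description precedes it below -/
import Mathlib

section
/- If S₁ and S₂ both satisfy the closure property SafePred(S ∪ WinningMoves(S), Uncontrollable(S)) ⊆ S, then their intersection S₁ ∩ S₂ also satisfies it: SafePred((S₁∩S₂) ∪ WinningMoves(S₁∩S₂), Uncontrollable(S₁∩S₂)) ⊆ S₁ ∩ S₂. -/
def Cover {S : Type*} (delay : ℝ → S → S → Prop) (s : S) (δ : ℝ) : Set S :=
  {s'' | ∃ δ', 0 ≤ δ' ∧ δ' ≤ δ ∧ delay δ' s s''}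

def SafePred {S : Type*} (delay : ℝ → S → S → Prop) (S₁ S₂ : Set S) : Set S :=
  {s | ∃ δ, 0 ≤ δ ∧ ∃ s' ∈ S₁, delay δ s s' ∧ Cover delay s δ ∩ S₂ = ∅}

def WinningMoves {S T : Type*} (trans : T → S → S → Prop) (Tc : Set T) (A : Set S) : Set S :=
  {s | ∃ t ∈ Tc, ∃ s' ∈ A, trans t s s'}

def Uncontrollable {S T : Type*} (trans : T → S → S → Prop) (Tu : Set T) (A : Set S) : Set S :=
  {s | ∃ t ∈ Tu, ∃ s', s' ∉ A ∧ trans t s s'}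

/-- The closure property `SafePred(S ∪ WinningMoves(S), Uncontrollable(S)) ⊆ S`
is stable under intersection. -/
theorem closure_inter {S T : Type*}
    (delay : ℝ → S → S → Prop) (trans : T → S → S → Prop) (Tc Tu : Set T)
    (S₁ S₂ : Set S)
    (h₁ : SafePred delay (S₁ ∪ WinningMoves trans Tc S₁) (Uncontrollable trans Tu S₁) ⊆ S₁)
    (h₂ : SafePred delay (S₂ ∪ WinningMoves trans Tc S₂) (Uncontrollable trans Tu S₂) ⊆ S₂) :
    SafePred delay ((S₁ ∩ S₂) ∪ WinningMoves trans Tc (S₁ ∩ S₂))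
      (Uncontrollable trans Tu (S₁ ∩ S₂)) ⊆ S₁ ∩ S₂ := by
  intro s hs
  obtain ⟨δ, hδ, s', hs', hd, hcov⟩ := hs
  have key : ∀ (A : Set S), S₁ ∩ S₂ ⊆ A →
      s ∈ SafePred delay (A ∪ WinningMoves trans Tc A) (Uncontrollable trans Tu A) := by
    intro A hA
    refine ⟨δ, hδ, s', ?_, hd, ?_⟩
    · rcases hs' with h | ⟨t, ht, s'', hs'', htr⟩
      · exact Or.inl (hA h)
      · exact Or.inr ⟨t, ht, s'', hA hs'', htr⟩
    · rw [Set.eq_empty_iff_forall_notMem] at hcov ⊢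
      rintro x ⟨hx, t, ht, y, hy, htr⟩
      exact hcov x ⟨hx, t, ht, y, fun h => hy (hA h), htr⟩
  exact ⟨h₁ (key S₁ Set.inter_subset_left), h₂ (key S₂ Set.inter_subset_right)⟩
end

section
/- For zones (convex sets) S₁, S₂ of valuations, SafePred(S₁, S₂) = (Pred_t(S₁) \ Pred_t(S₂)) ∪ Pred_t((S₁ ∩ Pred_t(S₂)) \ S₂), where Pred_t denotes the temporal (time-)predecessor operator. -/
/-- States are pairs of a clock valuation and a parameter valuation;
a delay adds `δ` uniformly to all clocks and keeps the parameters. -/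
def addDelay {X P : Type*} (s : (X → ℝ) × P) (δ : ℝ) : (X → ℝ) × P :=
  (fun x => s.1 x + δ, s.2)

/-- Temporal (time-)predecessor operator. -/
def PredT {X P : Type*} (A : Set ((X → ℝ) × P)) : Set ((X → ℝ) × P) :=
  {s | ∃ δ, 0 ≤ δ ∧ addDelay s δ ∈ A}

/-- `SafePred S₁ S₂` : states that can delay into `S₁` while the whole
covered delay segment avoids `S₂`. -/
def SafePredT {X P : Type*} (S₁ S₂ : Set ((X → ℝ) × P)) : Set ((X → ℝ) × P) :=
  {s | ∃ δ, 0 ≤ δ ∧ addDelay s δ ∈ S₁ ∧ ∀ δ', 0 ≤ δ' → δ' ≤ δ → addDelay s δ' ∉ S₂}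

/-- A zone is delay-convex: membership along a delay line is an interval. -/
def DelayConvex {X P : Type*} (A : Set ((X → ℝ) × P)) : Prop :=
  ∀ (s : (X → ℝ) × P) (δ₁ δ δ₂ : ℝ), δ₁ ≤ δ → δ ≤ δ₂ →
    addDelay s δ₁ ∈ A → addDelay s δ₂ ∈ A → addDelay s δ ∈ A

lemma addDelay_addDelay {X P : Type*} (s : (X → ℝ) × P) (a b : ℝ) :
    addDelay (addDelay s a) b = addDelay s (a + b) := by
  simp [addDelay, add_assoc]

/-- For convex zones `S₁`, `S₂`:
`SafePred(S₁,S₂) = (Pred_t(S₁) \ Pred_t(S₂)) ∪ Pred_t((S₁ ∩ Pred_t(S₂)) \ S₂)`. -/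
theorem safePred_zones {X P : Type*} (S₁ S₂ : Set ((X → ℝ) × P))
    (h₁ : DelayConvex S₁) (h₂ : DelayConvex S₂) :
    SafePredT S₁ S₂ =
      (PredT S₁ \ PredT S₂) ∪ PredT ((S₁ ∩ PredT S₂) \ S₂) := by
  ext s
  constructor
  · rintro ⟨δ, hδ, hS1, havoid⟩
    by_cases hp : s ∈ PredT S₂
    · right
      obtain ⟨ε, hε, hεS2⟩ := hp
      have hδε : δ < ε := by
        by_contra h
        exact havoid ε hε (le_of_not_gt h) hεS2
      refine ⟨δ, hδ, ⟨hS1, ⟨ε - δ, by linarith, ?_⟩⟩, havoid δ hδ le_rfl⟩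
      rw [addDelay_addDelay]
      simpa [add_sub_cancel] using hεS2
    · exact Or.inl ⟨⟨δ, hδ, hS1⟩, hp⟩
  · rintro (⟨⟨δ, hδ, hS1⟩, hp⟩ | ⟨δ, hδ, ⟨⟨hS1, ε, hε, hεS2⟩, hnot⟩⟩)
    · exact ⟨δ, hδ, hS1, fun δ' h1 h2 hmem => hp ⟨δ', h1, hmem⟩⟩
    · refine ⟨δ, hδ, hS1, fun δ' h1 h2 hmem => ?_⟩
      rw [addDelay_addDelay] at hεS2
      exact hnot (h₂ s δ' δ (δ + ε) h2 (by linarith) hmem hεS2)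
end

section
/- For finite unions of convex zones, SafePred(⋃ᵢ S₁ᵢ, ⋃ⱼ S₂ⱼ) = ⋃ᵢ (Pred_t(S₁ᵢ) ∩ ⋂ⱼ SafePred(S₁ᵢ, S₂ⱼ)). -/
/-- For finite unions of convex zones:
`SafePred(⋃ᵢ S₁ᵢ, ⋃ⱼ S₂ⱼ) = ⋃ᵢ (Pred_t(S₁ᵢ) ∩ ⋂ⱼ SafePred(S₁ᵢ, S₂ⱼ))`. -/
theorem safePred_unions {X P I J : Type*} [Finite I] [Finite J]
    (S₁ : I → Set ((X → ℝ) × P)) (S₂ : J → Set ((X → ℝ) × P))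
    (h₁ : ∀ i, DelayConvex (S₁ i)) (h₂ : ∀ j, DelayConvex (S₂ j)) :
    SafePredT (⋃ i, S₁ i) (⋃ j, S₂ j) =
      ⋃ i, (PredT (S₁ i) ∩ ⋂ j, SafePredT (S₁ i) (S₂ j)) := by
  ext s
  simp only [Set.mem_iUnion, Set.mem_inter_iff, Set.mem_iInter]
  constructor
  · rintro ⟨δ, hδ, hmem, havoid⟩
    obtain ⟨i, hi⟩ := Set.mem_iUnion.mp hmem
    refine ⟨i, ⟨δ, hδ, hi⟩, fun j => ⟨δ, hδ, hi, fun δ' h1 h2 hin => ?_⟩⟩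
    exact havoid δ' h1 h2 (Set.mem_iUnion.mpr ⟨j, hin⟩)
  · rintro ⟨i, ⟨δ₀, hδ₀, hmem₀⟩, hsafe⟩
    by_cases hJ : Nonempty J
    · choose f hf0 hfmem hfavoid using hsafe
      obtain ⟨j₀, hj₀⟩ := Finite.exists_min f
      refine ⟨f j₀, hf0 j₀, Set.mem_iUnion.mpr ⟨i, hfmem j₀⟩, fun δ' h1 h2 hin => ?_⟩
      obtain ⟨j, hj⟩ := Set.mem_iUnion.mp hin
      exact hfavoid j δ' h1 (h2.trans (hj₀ j)) hj
    · refine ⟨δ₀, hδ₀, Set.mem_iUnion.mpr ⟨i, hmem₀⟩, fun δ' h1 h2 hin => ?_⟩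
      obtain ⟨j, _⟩ := Set.mem_iUnion.mp hin
      exact hJ ⟨j⟩
end
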